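/- arXiv:1711.09994 — 2 statements merged into one kernel-verified Lean document; each statement's English description precedes it below -/
import Mathlib

section
/- If $f_1, \dots, f_n$ are convex functions on $\mathbb{R}^d$ with common domain of finiteness $\Theta$ having nonempty interior, each differentiable on $\mathrm{int}(\Theta)$ and each steep (i.e., $\|\nabla f_j(x_i)\| \to \infty$ along any sequence $(x_i)$ in $\mathrm{int}(\Theta)$ converging to a boundary point of $\Theta$), then the average $\bar f = \frac{1}{n}\sum_{j=1}^n f_j$ is steep. -/
open Filter Topology

/-- A convex function `f` with effective domain `Θ` is *steep* if along any sequence of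
points of `interior Θ` converging to a boundary point of `Θ`, the norm of the gradient
tends to infinity. -/
def Steep {d : ℕ} (Θ : Set (EuclideanSpace ℝ (Fin d))) (f : EuclideanSpace ℝ (Fin d) → ℝ) :
    Prop :=
  ∀ x ∈ frontier Θ, ∀ u : ℕ → EuclideanSpace ℝ (Fin d),
    (∀ i, u i ∈ interior Θ) → Tendsto u atTop (𝓝 x) →
      Tendsto (fun i => ‖gradient f (u i)‖) atTop atTop

open scoped InnerProductSpace in
lemma inner_gradient_le_sub {d : ℕ} {Θ : Set (EuclideanSpace ℝ (Fin d))}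
    {f : EuclideanSpace ℝ (Fin d) → ℝ} (hconv : ConvexOn ℝ Θ f)
    {a z : EuclideanSpace ℝ (Fin d)} (ha : a ∈ Θ) (hz : z ∈ Θ)
    (hdiff : DifferentiableAt ℝ f a) :
    ⟪gradient f a, z - a⟫_ℝ ≤ f z - f a := by
  have hγ : HasDerivAt (fun t : ℝ => a + t • (z - a)) (z - a) 0 := by
    simpa using ((hasDerivAt_id (0:ℝ)).smul_const (z - a)).const_add a
  have h0 : a = a + (0:ℝ) • (z - a) := by simp
  have hφ : HasDerivAt (fun t : ℝ => f (a + t • (z - a))) (fderiv ℝ f a (z - a)) 0 := by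
    have h : HasFDerivAt f (fderiv ℝ f a) (a + (0:ℝ) • (z - a)) := by
      simpa using hdiff.hasFDerivAt
    simpa [Function.comp_def] using h.comp_hasDerivAt 0 hγ
  have hgrad : ⟪gradient f a, z - a⟫_ℝ = fderiv ℝ f a (z - a) := by
    rw [gradient, InnerProductSpace.toDual_symm_apply]
  rw [hasDerivAt_iff_tendsto_slope] at hφ
  have hmono : 𝓝[>] (0:ℝ) ≤ 𝓝[≠] (0:ℝ) :=
    nhdsWithin_mono _ fun t ht => ne_of_gt ht
  rw [hgrad]
  refine le_of_tendsto (hφ.mono_left hmono) ?_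
  filter_upwards [Ioc_mem_nhdsGT_of_mem (by constructor <;> norm_num : (0:ℝ) ∈ Set.Ico (0:ℝ) 1)]
    with t ht
  have ht0 : 0 < t := ht.1
  have ht1 : t ≤ 1 := ht.2
  have hcomb : a + t • (z - a) = (1 - t) • a + t • z := by module
  have hle : f (a + t • (z - a)) ≤ (1 - t) * f a + t * f z := by
    rw [hcomb]
    simpa [smul_eq_mul] using hconv.2 ha hz (by linarith : (0:ℝ) ≤ 1 - t) ht0.le (by ring)
  rw [slope_def_field]
  simp only [sub_zero, zero_smul, add_zero]
  rw [div_le_iff₀ ht0]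
  nlinarith

/-- If `f 1, ..., f n` are convex functions on `ℝ^d` with common domain of finiteness `Θ`
having nonempty interior, each differentiable on `interior Θ` and each steep, then the
average `(1/n) ∑ j, f j` is steep. -/
theorem steep_average {d n : ℕ} (hn : 0 < n) (Θ : Set (EuclideanSpace ℝ (Fin d)))
    (hΘ : (interior Θ).Nonempty) (f : Fin n → EuclideanSpace ℝ (Fin d) → ℝ)
    (hconv : ∀ j, ConvexOn ℝ Θ (f j))
    (hdiff : ∀ j, ∀ x ∈ interior Θ, DifferentiableAt ℝ (f j) x)
    (hsteep : ∀ j, Steep Θ (f j)) :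
    Steep Θ (fun x => (1 / n : ℝ) * ∑ j, f j x) := by
  open scoped InnerProductSpace in
  classical
  intro x hx u hu hlim
  have hn' : (0:ℝ) < n := by exact_mod_cast hn
  obtain ⟨y, hy⟩ := hΘ
  obtain ⟨ε, hε, hball⟩ := Metric.isOpen_iff.mp isOpen_interior y hy
  set ρ : ℝ := ε / 2 with hρdef
  have hρ : 0 < ρ := by positivity
  have hK : Metric.closedBall y ρ ⊆ interior Θ :=
    (Metric.closedBall_subset_ball (by rw [hρdef]; linarith)).trans hball
  have hΘconv : Convex ℝ Θ := (hconv ⟨0, hn⟩).1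
  have hcont : ∀ j, ContinuousOn (f j) (interior Θ) := fun j =>
    ((hconv j).subset interior_subset hΘconv.interior).continuousOn isOpen_interior
  -- upper bounds on the closed ball
  have hMj : ∀ j, ∃ Mj : ℝ, ∀ z ∈ Metric.closedBall y ρ, f j z ≤ Mj := by
    intro j
    obtain ⟨Mj, hMj⟩ := (isCompact_closedBall y ρ).exists_bound_of_continuousOn
      ((hcont j).mono hK)
    exact ⟨Mj, fun z hz => (le_abs_self _).trans (by simpa using hMj z hz)⟩
  choose M hM using hMj
  -- eventual lower bound on f j (u i)
  set m : EuclideanSpace ℝ (Fin d) := (1/2:ℝ) • y + (1/2:ℝ) • x with hmdef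
  have hm : m ∈ interior Θ :=
    hΘconv.combo_interior_closure_mem_interior hy (frontier_subset_closure hx)
      (by norm_num) (by norm_num) (by norm_num)
  set B : Fin n → ℝ := fun j => 2 * (f j m - 1) - f j y with hBdef
  have hBev : ∀ᶠ i in atTop, ∀ j, B j ≤ f j (u i) := by
    rw [eventually_all]
    intro j
    have hmi : Tendsto (fun i => f j ((1/2:ℝ) • y + (1/2:ℝ) • u i)) atTop (𝓝 (f j m)) := by
      have h1 : Tendsto (fun i => (1/2:ℝ) • y + (1/2:ℝ) • u i) atTop (𝓝 m) := by
        rw [hmdef]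
        exact tendsto_const_nhds.add (hlim.const_smul _)
      exact (((hcont j).continuousAt (isOpen_interior.mem_nhds hm)).tendsto).comp h1
    have hev : ∀ᶠ i in atTop, f j m - 1 ≤ f j ((1/2:ℝ) • y + (1/2:ℝ) • u i) :=
      hmi.eventually (eventually_ge_nhds (by linarith))
    filter_upwards [hev] with i hi
    have hmid := (hconv j).2 (interior_subset hy) (interior_subset (hu i))
      (by norm_num : (0:ℝ) ≤ 1/2) (by norm_num : (0:ℝ) ≤ 1/2) (by norm_num)
    simp only [smul_eq_mul] at hmid
    rw [hBdef]
    dsimp only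
    linarith
  -- gradient of the average
  have hGrad : ∀ i, gradient (fun x => (1/n:ℝ) * ∑ j, f j x) (u i)
      = (1/n:ℝ) • ∑ j, gradient (f j) (u i) := by
    intro i
    have hsum : HasFDerivAt (fun x => ∑ j, f j x) (∑ j, fderiv ℝ (f j) (u i)) (u i) :=
      HasFDerivAt.fun_sum (fun j _ => (hdiff j _ (hu i)).hasFDerivAt)
    have hF : HasFDerivAt (fun x => (1/n:ℝ) * ∑ j, f j x)
        ((1/n:ℝ) • ∑ j, fderiv ℝ (f j) (u i)) (u i) := by
      simpa [mul_comm] using hsum.const_mul ((1:ℝ)/n)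
    rw [hF.hasGradientAt.gradient]
    simp [gradient, map_smul, map_sum]
  -- key per-j inequality
  have hkey : ∀ᶠ i in atTop, ∀ j,
      ρ * ‖gradient (f j) (u i)‖ - (M j - B j) ≤ ⟪gradient (f j) (u i), u i - y⟫_ℝ := by
    filter_upwards [hBev] with i hBi j
    set g := gradient (f j) (u i) with hg
    set v : EuclideanSpace ℝ (Fin d) := if g = 0 then 0 else ‖g‖⁻¹ • g with hv
    have hgv : ⟪g, v⟫_ℝ = ‖g‖ := by
      rw [hv]
      split_ifs with h
      · simp [h]
      · have hne : ‖g‖ ≠ 0 := norm_ne_zero_iff.mpr h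
        rw [real_inner_smul_right, real_inner_self_eq_norm_sq, sq]
        field_simp
    have hvnorm : ‖v‖ ≤ 1 := by
      rw [hv]; split_ifs with h
      · simp
      · rw [norm_smul]
        simp [norm_inv]
        rw [inv_mul_cancel₀ (norm_ne_zero_iff.mpr h)]
    set z := y + ρ • v with hz
    have hzball : z ∈ Metric.closedBall y ρ := by
      rw [Metric.mem_closedBall, dist_eq_norm, hz]
      simp only [add_sub_cancel_left, norm_smul, Real.norm_eq_abs, abs_of_pos hρ]
      nlinarith [norm_nonneg v]
    have hzΘ : z ∈ Θ := interior_subset (hK hzball)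
    have hineq := inner_gradient_le_sub (hconv j) (interior_subset (hu i)) hzΘ
      (hdiff j _ (hu i))
    have hsplit : ⟪g, z - u i⟫_ℝ = ρ * ‖g‖ + ⟪g, y - u i⟫_ℝ := by
      have : z - u i = ρ • v + (y - u i) := by rw [hz]; abel
      rw [this, inner_add_right, real_inner_smul_right, hgv]
    have hneg : ⟪g, y - u i⟫_ℝ = -⟪g, u i - y⟫_ℝ := by
      rw [← inner_neg_right, neg_sub]
    have hfz : f j z ≤ M j := hM j z hzball
    have hfu : B j ≤ f j (u i) := hBi j
    rw [hg] at hsplit hneg ⊢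
    rw [hsplit, hneg] at hineq
    linarith
  -- final assembly
  set j0 : Fin n := ⟨0, hn⟩
  set C : ℝ := ∑ j, (M j - B j) with hC
  set R : ℝ := ‖x - y‖ + 1 with hR
  have hRpos : 0 < R := by positivity
  have hRbound : ∀ᶠ i in atTop, ‖u i - y‖ ≤ R := by
    have h1 : Tendsto (fun i => ‖u i - y‖) atTop (𝓝 ‖x - y‖) :=
      ((hlim.sub tendsto_const_nhds)).norm
    exact h1.eventually (eventually_le_nhds (lt_add_one _))
  have hmain : ∀ᶠ i in atTop, (ρ * ‖gradient (f j0) (u i)‖ - C) / (n * R)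
      ≤ ‖gradient (fun x => (1/n:ℝ) * ∑ j, f j x) (u i)‖ := by
    filter_upwards [hkey, hRbound] with i hki hRi
    set G := gradient (fun x => (1/n:ℝ) * ∑ j, f j x) (u i) with hG
    have hGeq : G = (1/n:ℝ) • ∑ j, gradient (f j) (u i) := hGrad i
    have hsum : ∑ j, (ρ * ‖gradient (f j) (u i)‖ - (M j - B j))
        ≤ ⟪∑ j, gradient (f j) (u i), u i - y⟫_ℝ := by
      rw [sum_inner]
      exact Finset.sum_le_sum fun j _ => hki j
    have hsingle : ρ * ‖gradient (f j0) (u i)‖ ≤ ∑ j, ρ * ‖gradient (f j) (u i)‖ :=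
      Finset.single_le_sum (f := fun j => ρ * ‖gradient (f j) (u i)‖)
        (fun j _ => by positivity) (Finset.mem_univ j0)
    have hsum2 : ∑ j, (ρ * ‖gradient (f j) (u i)‖ - (M j - B j))
        = (∑ j, ρ * ‖gradient (f j) (u i)‖) - C := by
      rw [hC, Finset.sum_sub_distrib]
    have hinner : ⟪G, u i - y⟫_ℝ = (1/n:ℝ) * ⟪∑ j, gradient (f j) (u i), u i - y⟫_ℝ := by
      rw [hGeq, real_inner_smul_left]
    have hcs : ⟪G, u i - y⟫_ℝ ≤ ‖G‖ * R := by
      refine (real_inner_le_norm _ _).trans ?_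
      exact mul_le_mul_of_nonneg_left hRi (norm_nonneg _)
    have hfinal : (1/n:ℝ) * (ρ * ‖gradient (f j0) (u i)‖ - C) ≤ ‖G‖ * R := by
      calc (1/n:ℝ) * (ρ * ‖gradient (f j0) (u i)‖ - C)
          ≤ (1/n:ℝ) * ((∑ j, ρ * ‖gradient (f j) (u i)‖) - C) := by
            apply mul_le_mul_of_nonneg_left _ (by positivity)
            linarith
        _ ≤ (1/n:ℝ) * ⟪∑ j, gradient (f j) (u i), u i - y⟫_ℝ := by
            apply mul_le_mul_of_nonneg_left _ (by positivity)
            rw [← hsum2]; exact hsum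
        _ = ⟪G, u i - y⟫_ℝ := hinner.symm
        _ ≤ ‖G‖ * R := hcs
    rw [div_le_iff₀ (by positivity)]
    have hmul := mul_le_mul_of_nonneg_left hfinal hn'.le
    have hnn : (n:ℝ) * (1/n * (ρ * ‖gradient (f j0) (u i)‖ - C))
        = ρ * ‖gradient (f j0) (u i)‖ - C := by field_simp
    rw [hnn] at hmul
    have hring : ‖G‖ * ((n:ℝ) * R) = (n:ℝ) * (‖G‖ * R) := by ring
    linarith
  refine tendsto_atTop_mono' atTop hmain ?_
  have h1 : Tendsto (fun i => ρ * ‖gradient (f j0) (u i)‖) atTop atTop :=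
    (hsteep j0 x hx u hu hlim).const_mul_atTop hρ
  have h2 : Tendsto (fun i => ρ * ‖gradient (f j0) (u i)‖ - C) atTop atTop := by
    simpa [sub_eq_add_neg] using tendsto_atTop_add_const_right atTop (-C) h1
  exact h2.atTop_div_const (by positivity)
end

section
/- With the assumptions of the previous context (each $\kappa_j$ strictly convex, steep, lower semi-continuous, common domain $\Theta$ with nonempty interior, common support $\mathcal{S}_X$), for every $n \geq 1$ the interior of the domain of the convex conjugate $(\bar\kappa_n)^*$ equals the interior of $C_X = \mathrm{cl}(\mathrm{conv}(\mathcal{S}_X))$: $\mathrm{int}(\mathrm{dom}((\bar\kappa_n)^*)) = \mathrm{int}(C_X)$. -/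
open MeasureTheory Filter Topology
open scoped RealInnerProductSpace


lemma ae_mem_supp {α : Type*} [MeasurableSpace α] [TopologicalSpace α]
    [SecondCountableTopology α] [OpensMeasurableSpace α]
    (μ : Measure α) :
    μ {x | ∀ U : Set α, IsOpen U → x ∈ U → μ U ≠ 0}ᶜ = 0 := by
  set S := {x | ∀ U : Set α, IsOpen U → x ∈ U → μ U ≠ 0}
  set B := {b ∈ TopologicalSpace.countableBasis α | μ b = 0}
  have hB : Sᶜ ⊆ ⋃₀ B := by
    intro x hx
    simp only [S, Set.mem_compl_iff, Set.mem_setOf_eq, not_forall] at hx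
    obtain ⟨U, hU, hxU, hμU⟩ := hx
    push_neg at hμU
    obtain ⟨b, hb, hxb, hbU⟩ :=
      (TopologicalSpace.isBasis_countableBasis α).exists_subset_of_mem_open hxU hU
    exact ⟨b, ⟨hb, measure_mono_null hbU hμU⟩, hxb⟩
  refine measure_mono_null hB ?_
  refine (measure_sUnion_null_iff ?_).2 fun s hs => hs.2
  exact (TopologicalSpace.countable_countableBasis α).mono fun b hb => hb.1

lemma isOpen_compl_supp {α : Type*} [MeasurableSpace α] [TopologicalSpace α]
    (μ : Measure α) :
    IsOpen {x | ∀ U : Set α, IsOpen U → x ∈ U → μ U ≠ 0}ᶜ := by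
  rw [isOpen_iff_mem_nhds]
  intro x hx
  simp only [Set.mem_compl_iff, Set.mem_setOf_eq, not_forall] at hx
  obtain ⟨U, hU, hxU, hμU⟩ := hx
  push_neg at hμU
  filter_upwards [hU.mem_nhds hxU] with y hy
  simp only [Set.mem_compl_iff, Set.mem_setOf_eq, not_forall]
  exact ⟨U, hU, hy, by simpa using hμU⟩

lemma ae_mem_SX {d : ℕ} {Ω : Type*} [MeasurableSpace Ω]
    (P : Measure Ω) (X : Ω → EuclideanSpace ℝ (Fin d)) (hmeas : Measurable X)
    (SX : Set (EuclideanSpace ℝ (Fin d)))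
    (hsupp : SX = {x | ∀ U : Set (EuclideanSpace ℝ (Fin d)),
      IsOpen U → x ∈ U → Measure.map X P U ≠ 0}) :
    ∀ᵐ ω ∂P, X ω ∈ SX := by
  have h0 : (P.map X) SXᶜ = 0 := by rw [hsupp]; exact ae_mem_supp (P.map X)
  have hopen : IsOpen SXᶜ := by rw [hsupp]; exact isOpen_compl_supp (P.map X)
  rw [Measure.map_apply hmeas hopen.measurableSet] at h0
  rw [ae_iff]
  convert h0 using 2
  rfl


lemma lemA {d : ℕ} {Ω : Type*} [MeasurableSpace Ω]
    (P : Measure Ω) [IsProbabilityMeasure P]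
    (X : ℕ → Ω → EuclideanSpace ℝ (Fin d)) (hmeas : ∀ j, Measurable (X j))
    (Θ : Set (EuclideanSpace ℝ (Fin d)))
    (hΘ : ∀ j, Θ = {θ : EuclideanSpace ℝ (Fin d) |
      Integrable (fun ω => Real.exp ⟪θ, X j ω⟫) P})
    (SX : Set (EuclideanSpace ℝ (Fin d)))
    (hsupp : ∀ j, SX = {x | ∀ U : Set (EuclideanSpace ℝ (Fin d)),
      IsOpen U → x ∈ U → Measure.map (X j) P U ≠ 0})
    (κ : ℕ → EuclideanSpace ℝ (Fin d) → ℝ)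
    (hκ : ∀ j θ, κ j θ = Real.log (∫ ω, Real.exp ⟪θ, X j ω⟫ ∂P))
    (n : ℕ) (hn : 0 < n) (a : EuclideanSpace ℝ (Fin d))
    (ha : a ∉ closure (convexHull ℝ SX)) :
    ¬ ((⨆ θ ∈ Θ, ((⟪θ, a⟫ - (1 / n : ℝ) * ∑ j ∈ Finset.range n, κ j θ : ℝ) : EReal))
        < (⊤ : EReal)) := by
  intro hlt
  obtain ⟨f, c, hfc, hca⟩ := geometric_hahn_banach_closed_point
    ((convex_convexHull ℝ SX).closure) isClosed_closure ha
  set u := (InnerProductSpace.toDual ℝ (EuclideanSpace ℝ (Fin d))).symm f with hu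
  have hu_app : ∀ x, ⟪u, x⟫ = f x := fun x => InnerProductSpace.toDual_symm_apply
  have hac : c < ⟪u, a⟫ := by rw [hu_app]; exact hca
  have hSb : ∀ x ∈ SX, ⟪u, x⟫ < c := fun x hx => by
    rw [hu_app]; exact hfc x (subset_closure (subset_convexHull ℝ SX hx))
  have hae : ∀ j, ∀ᵐ ω ∂P, X j ω ∈ SX := fun j => ae_mem_SX P (X j) (hmeas j) SX (hsupp j)
  -- key integrability and bound
  have hkey : ∀ t : ℝ, 0 ≤ t → ∀ j : ℕ,
      Integrable (fun ω => Real.exp ⟪t • u, X j ω⟫) P ∧ κ j (t • u) ≤ t * c := by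
    intro t ht j
    have hb : ∀ᵐ ω ∂P, Real.exp ⟪t • u, X j ω⟫ ≤ Real.exp (t * c) := by
      filter_upwards [hae j] with ω hω
      rw [real_inner_smul_left]
      exact Real.exp_le_exp.2 (mul_le_mul_of_nonneg_left (hSb _ hω).le ht)
    have hm : Measurable fun ω => Real.exp ⟪t • u, X j ω⟫ :=
      Real.measurable_exp.comp (Measurable.inner measurable_const (hmeas j))
    have hint : Integrable (fun ω => Real.exp ⟪t • u, X j ω⟫) P := by
      refine Integrable.mono' (integrable_const (Real.exp (t * c)))
        hm.aestronglyMeasurable ?_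
      filter_upwards [hb] with ω hω
      rwa [Real.norm_eq_abs, abs_of_pos (Real.exp_pos _)]
    refine ⟨hint, ?_⟩
    rw [hκ]
    have hpos : 0 < ∫ ω, Real.exp ⟪t • u, X j ω⟫ ∂P := integral_exp_pos hint
    have hle : ∫ ω, Real.exp ⟪t • u, X j ω⟫ ∂P ≤ Real.exp (t * c) := by
      calc ∫ ω, Real.exp ⟪t • u, X j ω⟫ ∂P ≤ ∫ _ω, Real.exp (t * c) ∂P :=
            integral_mono_ae hint (integrable_const _) hb
        _ = Real.exp (t * c) := by simp [integral_const, measure_univ]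
    calc Real.log (∫ ω, Real.exp ⟪t • u, X j ω⟫ ∂P) ≤ Real.log (Real.exp (t * c)) :=
          Real.log_le_log hpos hle
      _ = t * c := Real.log_exp _
  obtain ⟨b, hb1, hb2⟩ := EReal.exists_between_coe_real hlt
  have hdpos : 0 < ⟪u, a⟫ - c := by linarith
  set t := (|b| + 1) / (⟪u, a⟫ - c) with htdef
  have htpos : 0 < t := div_pos (by positivity) hdpos
  have hmem : t • u ∈ Θ := by rw [hΘ 0]; exact (hkey t htpos.le 0).1
  have hval : (((⟪t • u, a⟫ - (1 / n : ℝ) * ∑ j ∈ Finset.range n, κ j (t • u) : ℝ)) : EReal)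
      ≤ ⨆ θ ∈ Θ, ((⟪θ, a⟫ - (1 / n : ℝ) * ∑ j ∈ Finset.range n, κ j θ : ℝ) : EReal) :=
    le_iSup₂ (f := fun θ (_ : θ ∈ Θ) =>
      ((⟪θ, a⟫ - (1 / n : ℝ) * ∑ j ∈ Finset.range n, κ j θ : ℝ) : EReal)) (t • u) hmem
  have hsum : ∑ j ∈ Finset.range n, κ j (t • u) ≤ (n : ℝ) * (t * c) := by
    calc ∑ j ∈ Finset.range n, κ j (t • u) ≤ ∑ _j ∈ Finset.range n, t * c :=
          Finset.sum_le_sum fun j _ => (hkey t htpos.le j).2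
      _ = (n : ℝ) * (t * c) := by simp [Finset.sum_const, mul_comm]
  have hn0 : (n : ℝ) ≠ 0 := Nat.cast_ne_zero.2 hn.ne'
  have hvge : |b| + 1 ≤ ⟪t • u, a⟫ - (1 / n : ℝ) * ∑ j ∈ Finset.range n, κ j (t • u) := by
    have h1 : ⟪t • u, a⟫ = t * ⟪u, a⟫ := real_inner_smul_left _ _ _
    have h2 : (1 / n : ℝ) * ∑ j ∈ Finset.range n, κ j (t • u) ≤ t * c := by
      have := mul_le_mul_of_nonneg_left hsum (by positivity : (0:ℝ) ≤ 1 / n)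
      calc (1 / n : ℝ) * ∑ j ∈ Finset.range n, κ j (t • u) ≤ (1/n : ℝ) * ((n:ℝ) * (t*c)) := this
        _ = t * c := by field_simp
    have h3 : t * (⟪u, a⟫ - c) = |b| + 1 := div_mul_cancel₀ _ hdpos.ne'
    nlinarith
  have hlt2 : (((⟪t • u, a⟫ - (1 / n : ℝ) * ∑ j ∈ Finset.range n, κ j (t • u) : ℝ)) : EReal)
      < (b : EReal) := lt_of_le_of_lt hval hb1
  rw [EReal.coe_lt_coe_iff] at hlt2
  have : |b| + 1 ≤ b := le_trans hvge hlt2.le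
  have := le_abs_self b
  linarith


lemma lemB {d : ℕ} {Ω : Type*} [MeasurableSpace Ω]
    (P : Measure Ω) [IsProbabilityMeasure P]
    (X : ℕ → Ω → EuclideanSpace ℝ (Fin d)) (hmeas : ∀ j, Measurable (X j))
    (Θ : Set (EuclideanSpace ℝ (Fin d)))
    (hΘ : ∀ j, Θ = {θ : EuclideanSpace ℝ (Fin d) |
      Integrable (fun ω => Real.exp ⟪θ, X j ω⟫) P})
    (SX : Set (EuclideanSpace ℝ (Fin d)))
    (hsupp : ∀ j, SX = {x | ∀ U : Set (EuclideanSpace ℝ (Fin d)),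
      IsOpen U → x ∈ U → Measure.map (X j) P U ≠ 0})
    (κ : ℕ → EuclideanSpace ℝ (Fin d) → ℝ)
    (hκ : ∀ j θ, κ j θ = Real.log (∫ ω, Real.exp ⟪θ, X j ω⟫ ∂P))
    (n : ℕ) (hn : 0 < n) (a : EuclideanSpace ℝ (Fin d))
    (ha : a ∈ interior (closure (convexHull ℝ SX))) :
    (⨆ θ ∈ Θ, ((⟪θ, a⟫ - (1 / n : ℝ) * ∑ j ∈ Finset.range n, κ j θ : ℝ) : EReal))
        < (⊤ : EReal) := by
  obtain ⟨ε, hε, hball⟩ := Metric.isOpen_iff.1 isOpen_interior a ha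
  have hC : Metric.ball a ε ⊆ closure (convexHull ℝ SX) := hball.trans interior_subset
  -- in every direction there is a support point beyond a
  have claim : ∀ u : EuclideanSpace ℝ (Fin d), ‖u‖ = 1 → ∃ x ∈ SX, ε/4 < ⟪u, x - a⟫ := by
    intro u hu
    by_contra hcon
    push_neg at hcon
    have hhalf : closure (convexHull ℝ SX) ⊆ {z | ⟪u, z⟫ ≤ ε/4 + ⟪u, a⟫} := by
      refine closure_minimal (convexHull_min ?_ ?_) ?_
      · intro x hx
        have h := hcon x hx
        rw [inner_sub_right] at h
        rw [Set.mem_setOf_eq]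
        linarith
      · exact convex_halfSpace_le
          ⟨fun x y => inner_add_right u x y, fun r x => real_inner_smul_right u x r⟩ _
      · exact isClosed_le (Continuous.inner continuous_const continuous_id) continuous_const
    have hmem : a + (ε/2) • u ∈ Metric.ball a ε := by
      rw [Metric.mem_ball, dist_eq_norm]
      simp only [add_sub_cancel_left, norm_smul, hu, Real.norm_eq_abs, mul_one]
      rw [abs_of_pos (by linarith)]
      linarith
    have h2 := hhalf (hC hmem)
    rw [Set.mem_setOf_eq, inner_add_right, real_inner_smul_right,
      real_inner_self_eq_norm_sq, hu] at h2
    nlinarith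
  -- finite subcover of the unit sphere
  set W : SX → Set (EuclideanSpace ℝ (Fin d)) :=
    fun x => {u' | ε/8 < ⟪u', (x : EuclideanSpace ℝ (Fin d)) - a⟫} with hW
  have hWopen : ∀ x, IsOpen (W x) := fun x =>
    isOpen_lt continuous_const (Continuous.inner continuous_id continuous_const)
  have hcover : Metric.sphere (0 : EuclideanSpace ℝ (Fin d)) 1 ⊆ ⋃ x, W x := by
    intro u hu
    rw [mem_sphere_zero_iff_norm] at hu
    obtain ⟨x, hx, hxu⟩ := claim u hu
    exact Set.mem_iUnion.2 ⟨⟨x, hx⟩, by simp only [W, Set.mem_setOf_eq]; linarith⟩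
  obtain ⟨T, hT⟩ := (isCompact_sphere (0 : EuclideanSpace ℝ (Fin d)) 1).elim_finite_subcover
    W hWopen hcover
  -- positive masses
  have hp : ∀ (i : SX) (j : ℕ),
      0 < ((P.map (X j)) (Metric.ball (i : EuclideanSpace ℝ (Fin d)) (ε/16))).toReal := by
    intro i j
    have hi := (Set.ext_iff.1 (hsupp j) (i : EuclideanSpace ℝ (Fin d))).1 i.2
    have h1 := hi (Metric.ball (i : EuclideanSpace ℝ (Fin d)) (ε/16)) Metric.isOpen_ball
      (Metric.mem_ball_self (by linarith))
    have : IsProbabilityMeasure (P.map (X j)) := Measure.isProbabilityMeasure_map (hmeas j).aemeasurable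
    exact ENNReal.toReal_pos h1 (measure_ne_top _ _)
  set p : SX → ℕ → ℝ :=
    fun i j => ((P.map (X j)) (Metric.ball (i : EuclideanSpace ℝ (Fin d)) (ε/16))).toReal with hpdef
  set M : ℝ := ∑ i ∈ T, ∑ j ∈ Finset.range n, |Real.log (p i j)| with hM
  have hM0 : 0 ≤ M :=
    Finset.sum_nonneg fun i _ => Finset.sum_nonneg fun j _ => abs_nonneg _
  have hMb : ∀ i ∈ T, ∀ j ∈ Finset.range n, -Real.log (p i j) ≤ M := by
    intro i hi j hj
    calc -Real.log (p i j) ≤ |Real.log (p i j)| := neg_le_abs _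
      _ ≤ ∑ j' ∈ Finset.range n, |Real.log (p i j')| :=
          Finset.single_le_sum (f := fun j' => |Real.log (p i j')|)
            (fun _ _ => abs_nonneg _) hj
      _ ≤ M := Finset.single_le_sum
          (f := fun i' => ∑ j' ∈ Finset.range n, |Real.log (p i' j')|)
          (fun _ _ => Finset.sum_nonneg fun _ _ => abs_nonneg _) hi
  have hn0 : (n : ℝ) ≠ 0 := Nat.cast_ne_zero.2 hn.ne'
  -- main bound
  have hbound : ∀ θ ∈ Θ, ⟪θ, a⟫ - (1 / n : ℝ) * ∑ j ∈ Finset.range n, κ j θ ≤ M := by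
    intro θ hθ
    by_cases hθ0 : θ = 0
    · have hκ0 : ∀ j, κ j (0 : EuclideanSpace ℝ (Fin d)) = 0 := by
        intro j
        simp [hκ, inner_zero_left, integral_const, measure_univ]
      subst hθ0
      simp only [inner_zero_left, hκ0, Finset.sum_const_zero, mul_zero, sub_zero]
      exact hM0
    · have hnrm : (0:ℝ) < ‖θ‖ := norm_pos_iff.2 hθ0
      set u' : EuclideanSpace ℝ (Fin d) := ‖θ‖⁻¹ • θ with hu'
      have hu'mem : u' ∈ Metric.sphere (0 : EuclideanSpace ℝ (Fin d)) 1 := by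
        rw [mem_sphere_zero_iff_norm, norm_smul, norm_inv, norm_norm,
          inv_mul_cancel₀ hnrm.ne']
      obtain ⟨i, hiT, hiW⟩ := Set.mem_iUnion₂.1 (hT hu'mem)
      have hiW' : ε/8 < ⟪u', (i : EuclideanSpace ℝ (Fin d)) - a⟫ := hiW
      -- points of the ball are on the far side
      have hkey : ∀ y ∈ Metric.ball (i : EuclideanSpace ℝ (Fin d)) (ε/16),
          ⟪θ, a⟫ ≤ ⟪θ, y⟫ := by
        intro y hy
        have hdist : ‖y - (i : EuclideanSpace ℝ (Fin d))‖ < ε/16 := by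
          rw [Metric.mem_ball, dist_eq_norm] at hy; exact hy
        have h2 : ⟪u', y - a⟫ = ⟪u', (i : EuclideanSpace ℝ (Fin d)) - a⟫
            + ⟪u', y - (i : EuclideanSpace ℝ (Fin d))⟫ := by
          rw [← inner_add_right]
          congr 1
          abel
        have h3 : |⟪u', y - (i : EuclideanSpace ℝ (Fin d))⟫| ≤ ‖y - (i:EuclideanSpace ℝ (Fin d))‖ := by
          have := abs_real_inner_le_norm u' (y - (i : EuclideanSpace ℝ (Fin d)))
          rw [mem_sphere_zero_iff_norm.1 hu'mem, one_mul] at this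
          exact this
        have h4 : 0 ≤ ⟪u', y - a⟫ := by
          have := abs_le.1 h3
          rw [h2]; linarith
        have h5 : ⟪θ, y - a⟫ = ‖θ‖ * ⟪u', y - a⟫ := by
          rw [hu', real_inner_smul_left, ← mul_assoc, mul_inv_cancel₀ hnrm.ne', one_mul]
        have h6 : 0 ≤ ⟪θ, y - a⟫ := h5 ▸ mul_nonneg hnrm.le h4
        rw [inner_sub_right] at h6
        linarith
      -- per-j lower bound for κ j θ
      have hκj : ∀ j ∈ Finset.range n, ⟪θ, a⟫ - κ j θ ≤ M := by
        intro j hj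
        have hintj : Integrable (fun ω => Real.exp ⟪θ, X j ω⟫) P := by
          rw [hΘ j] at hθ; exact hθ
        set s : Set Ω := X j ⁻¹' Metric.ball (i : EuclideanSpace ℝ (Fin d)) (ε/16) with hs
        have hsm : MeasurableSet s := hmeas j measurableSet_ball
        have hPs : p i j = (P s).toReal := by
          simp only [hpdef]
          rw [Measure.map_apply (hmeas j) measurableSet_ball]
        have h7 : Real.exp ⟪θ, a⟫ * (P s).toReal ≤ ∫ ω in s, Real.exp ⟪θ, X j ω⟫ ∂P := by
          rw [mul_comm, ← smul_eq_mul]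
          refine setIntegral_ge_of_const_le hsm (measure_ne_top P s) ?_ hintj.integrableOn
          intro ω hω
          exact Real.exp_le_exp.2 (hkey _ hω)
        have h8 : ∫ ω in s, Real.exp ⟪θ, X j ω⟫ ∂P ≤ ∫ ω, Real.exp ⟪θ, X j ω⟫ ∂P :=
          setIntegral_le_integral hintj (Filter.Eventually.of_forall fun ω => (Real.exp_pos _).le)
        have hppos : 0 < p i j := hp i j
        have h9 : 0 < Real.exp ⟪θ, a⟫ * p i j := by positivity
        have h10 : Real.log (Real.exp ⟪θ, a⟫ * p i j) ≤ κ j θ := by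
          rw [hκ]
          refine Real.log_le_log h9 ?_
          rw [hPs]
          exact h7.trans h8
        rw [Real.log_mul (Real.exp_pos _).ne' hppos.ne', Real.log_exp] at h10
        have := hMb i hiT j hj
        linarith
      -- average
      have hsum : ∑ j ∈ Finset.range n, (⟪θ, a⟫ - κ j θ) ≤ (n : ℝ) * M := by
        calc ∑ j ∈ Finset.range n, (⟪θ, a⟫ - κ j θ) ≤ ∑ _j ∈ Finset.range n, M :=
              Finset.sum_le_sum hκj
          _ = (n : ℝ) * M := by simp [Finset.sum_const, mul_comm]
      have heq : ⟪θ, a⟫ - (1 / n : ℝ) * ∑ j ∈ Finset.range n, κ j θ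
          = (1 / n : ℝ) * ∑ j ∈ Finset.range n, (⟪θ, a⟫ - κ j θ) := by
        rw [Finset.sum_sub_distrib, Finset.sum_const, Finset.card_range]
        field_simp
        ring
      rw [heq]
      calc (1 / n : ℝ) * ∑ j ∈ Finset.range n, (⟪θ, a⟫ - κ j θ)
          ≤ (1 / n : ℝ) * ((n : ℝ) * M) :=
            mul_le_mul_of_nonneg_left hsum (by positivity)
        _ = M := by field_simp
  refine lt_of_le_of_lt (iSup₂_le fun θ hθ => ?_) (EReal.coe_lt_top M)
  exact EReal.coe_le_coe_iff.2 (hbound θ hθ)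

/-- Under the assumptions on the log-mgfs `κ j` (strictly convex, steep, lower
semicontinuous on the common domain `Θ` of nonempty interior, common support `S_X`):
for every `n ≥ 1`, the interior of the domain of the convex conjugate `(κ̄_n)*` equals the
interior of `C_X = cl(conv S_X)`. -/
theorem interior_dom_conjugate_eq {d : ℕ} {Ω : Type*} [MeasurableSpace Ω]
    (P : Measure Ω) [IsProbabilityMeasure P]
    (X : ℕ → Ω → EuclideanSpace ℝ (Fin d)) (hmeas : ∀ j, Measurable (X j))
    (Θ : Set (EuclideanSpace ℝ (Fin d)))
    (hΘ : ∀ j, Θ = {θ : EuclideanSpace ℝ (Fin d) |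
      Integrable (fun ω => Real.exp ⟪θ, X j ω⟫) P})
    (hΘint : (interior Θ).Nonempty)
    (SX : Set (EuclideanSpace ℝ (Fin d)))
    (hsupp : ∀ j, SX = {x | ∀ U : Set (EuclideanSpace ℝ (Fin d)),
      IsOpen U → x ∈ U → Measure.map (X j) P U ≠ 0})
    (κ : ℕ → EuclideanSpace ℝ (Fin d) → ℝ)
    (hκ : ∀ j θ, κ j θ = Real.log (∫ ω, Real.exp ⟪θ, X j ω⟫ ∂P))
    (hconv : ∀ j, StrictConvexOn ℝ Θ (κ j)) (hsteep : ∀ j, Steep Θ (κ j))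
    (hlsc : ∀ j, LowerSemicontinuousOn (κ j) Θ) :
    ∀ n : ℕ, 0 < n →
      interior {a : EuclideanSpace ℝ (Fin d) |
          (⨆ θ ∈ Θ, ((⟪θ, a⟫ - (1 / n : ℝ) * ∑ j ∈ Finset.range n, κ j θ : ℝ) : EReal))
            < (⊤ : EReal)} =
        interior (closure (convexHull ℝ SX)) := by
  intro n hn
  apply subset_antisymm
  · refine interior_mono fun a haD => ?_
    by_contra haC
    exact lemA P X hmeas Θ hΘ SX hsupp κ hκ n hn a haC haD
  · exact interior_maximal (fun a ha => lemB P X hmeas Θ hΘ SX hsupp κ hκ n hn a ha)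
      isOpen_interior
end
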